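/- arXiv:1201.3142 — 3 statements merged into one kernel-verified Lean document; each statement's English description precedes it below -/
import Mathlib

section
/- The minimum of 1 + z + 2*x*y − x*z subject to 0.25 + x*y ≤ x and x,y,z ∈ [0,1] is exactly 1, and the maximum is exactly 5/2. -/
theorem stmt5 :
    IsLeast {E : ℝ | ∃ x y z : ℝ, 0 ≤ x ∧ x ≤ 1 ∧ 0 ≤ y ∧ y ≤ 1 ∧
      0 ≤ z ∧ z ≤ 1 ∧ 0.25 + x * y ≤ x ∧
      E = 1 + z + 2 * x * y - x * z} 1 ∧
    IsGreatest {E : ℝ | ∃ x y z : ℝ, 0 ≤ x ∧ x ≤ 1 ∧ 0 ≤ y ∧ y ≤ 1 ∧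
      0 ≤ z ∧ z ≤ 1 ∧ 0.25 + x * y ≤ x ∧
      E = 1 + z + 2 * x * y - x * z} (5 / 2) := by
  constructor
  · constructor
    · exact ⟨1/4, 0, 0, by norm_num⟩
    · rintro E ⟨x, y, z, hx0, hx1, hy0, hy1, hz0, hz1, hc, rfl⟩
      nlinarith [mul_nonneg hx0 hy0, mul_nonneg hz0 (sub_nonneg.mpr hx1)]
  · constructor
    · exact ⟨1, 3/4, 0, by norm_num⟩
    · rintro E ⟨x, y, z, hx0, hx1, hy0, hy1, hz0, hz1, hc, rfl⟩
      nlinarith [mul_nonneg (sub_nonneg.mpr hz1) (sub_nonneg.mpr hx1)]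
end

section
/- The maximum value of z subject to: x₁+…+x₈ = 1, xᵢ ∈ [0,1], z ∈ [0,1], x₁+x₂ ≥ z, x₂+x₃+x₄ ≥ z, x₁+x₃+x₅ ≥ z, is exactly 2/3. -/
theorem stmt14 :
    IsGreatest {z : ℝ | ∃ x1 x2 x3 x4 x5 x6 x7 x8 : ℝ,
      x1 + x2 + x3 + x4 + x5 + x6 + x7 + x8 = 1 ∧
      (0 ≤ x1 ∧ x1 ≤ 1) ∧ (0 ≤ x2 ∧ x2 ≤ 1) ∧ (0 ≤ x3 ∧ x3 ≤ 1) ∧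
      (0 ≤ x4 ∧ x4 ≤ 1) ∧ (0 ≤ x5 ∧ x5 ≤ 1) ∧ (0 ≤ x6 ∧ x6 ≤ 1) ∧
      (0 ≤ x7 ∧ x7 ≤ 1) ∧ (0 ≤ x8 ∧ x8 ≤ 1) ∧
      (0 ≤ z ∧ z ≤ 1) ∧
      x1 + x2 ≥ z ∧ x2 + x3 + x4 ≥ z ∧ x1 + x3 + x5 ≥ z} (2 / 3) := by
  constructor
  · exact ⟨1/3, 1/3, 1/3, 0, 0, 0, 0, 0, by norm_num⟩
  · rintro z ⟨x1, x2, x3, x4, x5, x6, x7, x8, hs, h1, h2, h3, h4, h5, h6, h7, h8, hz, c1, c2, c3⟩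
    linarith [h1.1, h2.1, h3.1, h4.1, h5.1, h6.1, h7.1, h8.1]
end

section
/- The maximum of x₁+x₃ subject to x₁+…+x₈ = 1, xᵢ ∈ [0,1], x₁+x₂ ≥ 2/3, x₂+x₃+x₄ ≥ 2/3, x₁+x₃+x₅ ≥ 2/3, is exactly 2/3. -/
theorem stmt15 :
    IsGreatest {v : ℝ | ∃ x1 x2 x3 x4 x5 x6 x7 x8 : ℝ,
      x1 + x2 + x3 + x4 + x5 + x6 + x7 + x8 = 1 ∧
      (0 ≤ x1 ∧ x1 ≤ 1) ∧ (0 ≤ x2 ∧ x2 ≤ 1) ∧ (0 ≤ x3 ∧ x3 ≤ 1) ∧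
      (0 ≤ x4 ∧ x4 ≤ 1) ∧ (0 ≤ x5 ∧ x5 ≤ 1) ∧ (0 ≤ x6 ∧ x6 ≤ 1) ∧
      (0 ≤ x7 ∧ x7 ≤ 1) ∧ (0 ≤ x8 ∧ x8 ≤ 1) ∧
      x1 + x2 ≥ 2 / 3 ∧ x2 + x3 + x4 ≥ 2 / 3 ∧ x1 + x3 + x5 ≥ 2 / 3 ∧
      v = x1 + x3} (2 / 3) := by
  constructor
  · exact ⟨1/3, 1/3, 1/3, 0, 0, 0, 0, 0, by norm_num⟩
  · rintro v ⟨x1, x2, x3, x4, x5, x6, x7, x8, hs, h1, h2, h3, h4, h5, h6, h7, h8, c1, c2, c3, hv⟩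
    obtain ⟨h10,_⟩ := h1; obtain ⟨h40,_⟩ := h4; obtain ⟨h50,_⟩ := h5
    obtain ⟨h60,_⟩ := h6; obtain ⟨h70,_⟩ := h7; obtain ⟨h80,_⟩ := h8
    linarith
end
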